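/- Let A be a commutative ring, let x = (x_1, …, x_f) and y = (y_1, …, y_e) be finite families of elements of A, and let R = (e)^f be the rectangular partition with f parts equal to e. Then s_R(x − y) = ∏_{i=1}^{f} ∏_{j=1}^{e} (x_i − y_j). (Geometrically this is the identity s_{(e)^f}(F − E) = c_top(Hom(E, F)) used in the paper to compute the class [Z] of the zero scheme.) -/

import Mathlib

open scoped BigOperators

/-- The generating series `∏_j (1 − y_j t) · ∏_i (1 − x_i t)⁻¹`, where the inverse of
`1 − x_i t` is the geometric series `∑ x_i^n t^n`. -/
noncomputable def genSeries {A : Type*} [CommRing A] {f e : ℕ} (x : Fin f → A) (y : Fin e → A) :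
    PowerSeries A :=
  (∏ j : Fin e, (1 - PowerSeries.C (y j) * PowerSeries.X)) *
    ∏ i : Fin f, PowerSeries.mk fun n => x i ^ n

/-- `h_k(x − y)`: the coefficient of `t^k` in the generating series, zero for `k < 0`. -/
noncomputable def hSuper {A : Type*} [CommRing A] {f e : ℕ} (x : Fin f → A) (y : Fin e → A)
    (k : ℤ) : A :=
  if k < 0 then 0 else PowerSeries.coeff k.toNat (genSeries x y)

/-- The (super)symmetric Schur determinant `s_I(x − y) = det(h_{I_i + j − i}(x − y))`
for an arbitrary integer sequence `I` of length `p`. -/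
noncomputable def schurDet {A : Type*} [CommRing A] {f e p : ℕ} (x : Fin f → A) (y : Fin e → A)
    (I : Fin p → ℤ) : A :=
  Matrix.det (Matrix.of fun i j : Fin p => hSuper x y (I i + (j : ℤ) - (i : ℤ)))


section RectangleSchurHelpers

variable {A : Type*} [CommRing A]

lemma one_sub_coeff_succ (a : A) (F : PowerSeries A) (n : ℕ) :
    PowerSeries.coeff (n+1) ((1 - PowerSeries.C a * PowerSeries.X) * F)
      = PowerSeries.coeff (n+1) F - a * PowerSeries.coeff n F := by
  have : (1 - PowerSeries.C a * PowerSeries.X) * F = F - PowerSeries.C a * (PowerSeries.X * F) := by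
    ring
  rw [this, map_sub, PowerSeries.coeff_C_mul, PowerSeries.coeff_succ_X_mul]

lemma one_sub_coeff_zero (a : A) (F : PowerSeries A) :
    PowerSeries.coeff 0 ((1 - PowerSeries.C a * PowerSeries.X) * F)
      = PowerSeries.coeff 0 F := by
  have : (1 - PowerSeries.C a * PowerSeries.X) * F = F - PowerSeries.C a * (PowerSeries.X * F) := by
    ring
  rw [this, map_sub, PowerSeries.coeff_C_mul, PowerSeries.coeff_zero_X_mul, mul_zero, sub_zero]

/-- geometric series inverse -/
lemma one_sub_mul_geom (a : A) :
    (1 - PowerSeries.C a * PowerSeries.X) * (PowerSeries.mk fun n => a ^ n) = 1 := by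
  ext n
  rcases n with _ | n
  · simp [one_sub_coeff_zero]
  · rw [one_sub_coeff_succ]
    simp [pow_succ, mul_comm, PowerSeries.coeff_one]

variable {f e : ℕ} (x : Fin f → A)

lemma genSeries_castSucc (y : Fin (e+1) → A) :
    genSeries x y = (1 - PowerSeries.C (y (Fin.last e)) * PowerSeries.X) *
      genSeries x (y ∘ Fin.castSucc) := by
  unfold genSeries
  rw [Fin.prod_univ_castSucc]
  ring_nf
  simp only [Function.comp]
  ring

lemma hSuper_rec (y : Fin (e+1) → A) (k : ℤ) :
    hSuper x y k = hSuper x (y ∘ Fin.castSucc) k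
      - y (Fin.last e) * hSuper x (y ∘ Fin.castSucc) (k - 1) := by
  unfold hSuper
  rcases lt_trichotomy k 0 with h | h | h
  · have h1 : k - 1 < 0 := by omega
    simp [h, h1]
  · subst h
    simp only [lt_irrefl, if_false, Int.toNat_zero, show ¬ ((0:ℤ) < 0) from by omega,
      show (0:ℤ) - 1 < 0 from by omega, if_true, mul_zero, sub_zero]
    rw [genSeries_castSucc x y, one_sub_coeff_zero]
  · have h0 : ¬ (k < 0) := by omega
    have h1 : ¬ (k - 1 < 0) := by omega
    have h2 : k.toNat = (k-1).toNat + 1 := by omega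
    simp only [h0, h1, if_false, h2]
    rw [genSeries_castSucc x y, one_sub_coeff_succ]

lemma branching {p : ℕ} (y : Fin (e+1) → A) (I : Fin p → ℤ) :
    schurDet x y I = ∑ S : Finset (Fin p),
      (∏ _i ∈ S, (-(y (Fin.last e)))) * schurDet x (y ∘ Fin.castSucc)
        (fun i => I i - if i ∈ S then 1 else 0) := by
  classical
  set c := y (Fin.last e) with hc
  set y' := y ∘ Fin.castSucc with hy'
  set b : Fin p → (Fin p → A) :=
    fun i j => -c * hSuper x y' (I i - 1 + (j : ℤ) - (i : ℤ)) with hb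
  set a : Fin p → (Fin p → A) :=
    fun i j => hSuper x y' (I i + (j : ℤ) - (i : ℤ)) with ha
  have hM : (Matrix.of fun i j : Fin p => hSuper x y (I i + (j : ℤ) - (i : ℤ))) = b + a := by
    funext i j
    show hSuper x y (I i + (j : ℤ) - (i : ℤ)) = b i j + a i j
    rw [hSuper_rec x y]
    have : I i + (j : ℤ) - (i : ℤ) - 1 = I i - 1 + (j : ℤ) - (i : ℤ) := by ring
    rw [this, hb, ha]
    ring
  have key : schurDet x y I =
      ∑ S : Finset (Fin p), Matrix.detRowAlternating (S.piecewise b a) := by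
    rw [schurDet, hM]
    exact (Matrix.detRowAlternating (R := A) (n := Fin p)).toMultilinearMap.map_add_univ b a
  rw [key]
  refine Finset.sum_congr rfl fun S _ => ?_
  have hpw : S.piecewise b a = fun i => (if i ∈ S then -c else 1) •
      (Matrix.of fun i j : Fin p =>
        hSuper x y' ((I i - if i ∈ S then 1 else 0) + (j : ℤ) - (i : ℤ))) i := by
    funext i
    by_cases hi : i ∈ S
    · rw [S.piecewise_eq_of_mem _ _ hi]
      funext j
      simp only [hi, if_true, Matrix.of_apply, Pi.smul_apply, smul_eq_mul, hb]
    · rw [S.piecewise_eq_of_notMem _ _ hi]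
      funext j
      simp only [hi, if_false, Matrix.of_apply, Pi.smul_apply, smul_eq_mul, ha, one_mul,
        sub_zero]
  rw [hpw]
  have hs := (Matrix.detRowAlternating (R := A) (n := Fin p)).toMultilinearMap.map_smul_univ
      (fun i => if i ∈ S then -c else 1)
      (Matrix.of fun i j : Fin p =>
        hSuper x y' ((I i - if i ∈ S then 1 else 0) + (j : ℤ) - (i : ℤ)))
  refine Eq.trans hs ?_
  rw [smul_eq_mul]
  congr 1
  rw [Finset.prod_ite_mem, Finset.univ_inter]

lemma Esum_aux (s : Finset (Fin f)) :
    (∀ r : ℕ, s.card < r →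
      PowerSeries.coeff r (∏ i ∈ s, (1 - PowerSeries.C (x i) * PowerSeries.X)) = 0) ∧
    (∀ c : A, ∑ r ∈ Finset.range (s.card + 1),
      PowerSeries.coeff r (∏ i ∈ s, (1 - PowerSeries.C (x i) * PowerSeries.X))
        * c ^ (s.card - r) = ∏ i ∈ s, (c - x i)) := by
  classical
  induction s using Finset.induction_on with
  | empty =>
    constructor
    · intro r hr
      simp only [Finset.prod_empty]
      rcases r with _ | r
      · omega
      · simp [PowerSeries.coeff_one]
    · intro c
      simp [PowerSeries.coeff_one]
  | @insert a s ha ih =>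
    obtain ⟨ihv, ihs⟩ := ih
    rw [Finset.prod_insert ha]
    set P := ∏ i ∈ s, (1 - PowerSeries.C (x i) * PowerSeries.X) with hP
    set n := s.card with hn
    have hcard : (insert a s).card = n + 1 := Finset.card_insert_of_notMem ha
    constructor
    · intro r hr
      rw [hcard] at hr
      rcases r with _ | r
      · omega
      · rw [one_sub_coeff_succ]
        rw [ihv (r+1) (by omega), ihv r (by omega)]
        ring
    · intro c
      rw [hcard]
      set T := ∑ r ∈ Finset.range (n + 1), PowerSeries.coeff r P * c ^ (n - r) with hT
      have hTval : T = ∏ i ∈ s, (c - x i) := ihs c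
      have hU : ∑ r ∈ Finset.range n, PowerSeries.coeff (r+1) P * c ^ (n - r)
          + PowerSeries.coeff 0 P * c ^ (n+1) = c * T := by
        rw [hT, Finset.mul_sum, Finset.sum_range_succ']
        congr 1
        · refine Finset.sum_congr rfl fun r hr => ?_
          simp only [Finset.mem_range] at hr
          have h3 : n - r = (n - (r+1)) + 1 := by omega
          rw [h3, pow_succ]
          ring
        · have : n - 0 = n := rfl
          rw [this]
          ring
      rw [Finset.sum_range_succ']
      have expand : ∀ r ∈ Finset.range (n + 1),
          PowerSeries.coeff (r+1) ((1 - PowerSeries.C (x a) * PowerSeries.X) * P)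
            * c ^ (n + 1 - (r+1))
          = PowerSeries.coeff (r+1) P * c ^ (n - r)
              - x a * (PowerSeries.coeff r P * c ^ (n - r)) := by
        intro r _
        rw [one_sub_coeff_succ]
        have h4 : n + 1 - (r+1) = n - r := by omega
        rw [h4]
        ring
      rw [Finset.sum_congr rfl expand, Finset.sum_sub_distrib]
      have h5 : ∑ r ∈ Finset.range (n+1), x a * (PowerSeries.coeff r P * c ^ (n - r))
          = x a * T := by rw [hT, Finset.mul_sum]
      have h6 : ∑ r ∈ Finset.range (n+1), PowerSeries.coeff (r+1) P * c ^ (n - r)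
          = ∑ r ∈ Finset.range n, PowerSeries.coeff (r+1) P * c ^ (n - r) := by
        rw [Finset.sum_range_succ, ihv (n+1) (by omega)]
        simp
      have h7 : PowerSeries.coeff 0 ((1 - PowerSeries.C (x a) * PowerSeries.X) * P)
          * c ^ (n + 1 - 0) = PowerSeries.coeff 0 P * c ^ (n+1) := by
        rw [one_sub_coeff_zero, Nat.sub_zero]
      rw [h5, h6, h7, Finset.prod_insert ha, ← hTval]
      linear_combination hU

noncomputable def pcoef (x : Fin f → A) (r : ℕ) : A :=
  PowerSeries.coeff r (∏ i : Fin f, (1 - PowerSeries.C (x i) * PowerSeries.X))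

lemma pcoef_vanish {r : ℕ} (hr : f < r) : pcoef x r = 0 := by
  have h := (Esum_aux x Finset.univ).1 r (by simpa using hr)
  simpa [pcoef] using h

lemma pcoef_sum (c : A) :
    ∑ r ∈ Finset.range (f + 1), pcoef x r * c ^ (f - r) = ∏ i : Fin f, (c - x i) := by
  have h := (Esum_aux x Finset.univ).2 c
  simpa [pcoef] using h

lemma pcoef_zero : pcoef x 0 = 1 := by
  unfold pcoef
  rw [PowerSeries.coeff_zero_eq_constantCoeff, map_prod]
  simp

lemma E_mul_genH :
    (∏ i : Fin f, (1 - PowerSeries.C (x i) * PowerSeries.X)) *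
      genSeries x (Fin.elim0 : Fin 0 → A) = 1 := by
  have hg : genSeries x (Fin.elim0 : Fin 0 → A) = ∏ i : Fin f, PowerSeries.mk fun n => x i ^ n := by
    unfold genSeries
    rw [Finset.univ_eq_empty (α := Fin 0), Finset.prod_empty, one_mul]
  rw [hg, ← Finset.prod_mul_distrib, Finset.prod_congr rfl fun i _ => one_sub_mul_geom (x i)]
  exact Finset.prod_const_one

lemma hrec (K : ℤ) (hK : 1 ≤ K) :
    ∑ r ∈ Finset.range (f + 1), pcoef x r * hSuper x (Fin.elim0 : Fin 0 → A) (K - r) = 0 := by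
  classical
  set N := K.toNat with hN
  have hN1 : 1 ≤ N := by omega
  set H := genSeries x (Fin.elim0 : Fin 0 → A) with hH
  have hcoeff : PowerSeries.coeff N
      ((∏ i : Fin f, (1 - PowerSeries.C (x i) * PowerSeries.X)) * H) = 0 := by
    rw [E_mul_genH]
    rw [PowerSeries.coeff_one]
    simp only [if_neg (by omega : ¬ N = 0)]
  rw [PowerSeries.coeff_mul, Finset.Nat.sum_antidiagonal_eq_sum_range_succ_mk] at hcoeff
  -- both sums equal the extended sum over range (N + f + 1)
  have hext1 : ∑ r ∈ Finset.range (f + 1), pcoef x r * hSuper x (Fin.elim0 : Fin 0 → A) (K - r)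
      = ∑ r ∈ Finset.range (N + f + 1), pcoef x r * hSuper x (Fin.elim0 : Fin 0 → A) (K - r) := by
    refine Finset.sum_subset ?_ ?_
    · intro r hr
      simp only [Finset.mem_range] at hr ⊢
      omega
    · intro r _ hr
      simp only [Finset.mem_range] at hr
      rw [pcoef_vanish x (by omega), zero_mul]
  have hext2 : ∑ u ∈ Finset.range (N + 1),
        PowerSeries.coeff u (∏ i : Fin f, (1 - PowerSeries.C (x i) * PowerSeries.X))
          * PowerSeries.coeff (N - u) H
      = ∑ r ∈ Finset.range (N + f + 1), pcoef x r * hSuper x (Fin.elim0 : Fin 0 → A) (K - r) := by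
    have step1 : ∑ u ∈ Finset.range (N + 1),
        PowerSeries.coeff u (∏ i : Fin f, (1 - PowerSeries.C (x i) * PowerSeries.X))
          * PowerSeries.coeff (N - u) H
        = ∑ u ∈ Finset.range (N + 1), pcoef x u * hSuper x (Fin.elim0 : Fin 0 → A) (K - u) := by
      refine Finset.sum_congr rfl fun u hu => ?_
      simp only [Finset.mem_range] at hu
      unfold hSuper pcoef
      have h1 : ¬ (K - u < 0) := by omega
      rw [if_neg h1]
      have h2 : (K - (u:ℤ)).toNat = N - u := by omega
      rw [h2, hH]
    rw [step1]
    refine Finset.sum_subset ?_ ?_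
    · intro r hr
      simp only [Finset.mem_range] at hr ⊢
      omega
    · intro r _ hr
      simp only [Finset.mem_range] at hr
      have : K - r < 0 := by omega
      unfold hSuper
      rw [if_pos this, mul_zero]
  rw [hext1, ← hext2]
  exact hcoeff

noncomputable def compM (n : ℕ) (a : Fin n → A) (c : A) : Matrix (Fin n) (Fin n) A :=
  Matrix.of fun k j =>
    (if (j : ℕ) + 1 = n then a k else if (k : ℕ) = (j : ℕ) + 1 then 1 else 0)
      - (if k = j then c else 0)

lemma compM_det : ∀ (n : ℕ) (a : Fin n → A) (c : A),
    (compM n a c).det = (-1)^n * (c^n - ∑ k : Fin n, a k * c^(k : ℕ)) := by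
  intro n
  induction n with
  | zero =>
    intro a c
    simp [Matrix.det_fin_zero]
  | succ n ih =>
    intro a c
    by_cases hn : n = 0
    · subst hn
      rw [Matrix.det_fin_one]
      simp only [compM, Matrix.of_apply]
      rw [Fin.sum_univ_one]
      norm_num
    · have hn' : 0 < n := by omega
      have hlast0 : (Fin.last n : Fin (n+1)) ≠ 0 := by
        intro hEq
        have := congrArg Fin.val hEq
        simp [Fin.val_last] at this
        omega
      rw [Matrix.det_succ_row_zero]
      have hterm : ∀ j : Fin (n+1),
          (-1 : A) ^ (j : ℕ) * compM (n+1) a c 0 j *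
            ((compM (n+1) a c).submatrix Fin.succ j.succAbove).det
          = (if j = Fin.last n then (-1)^n * a 0 else 0)
            + (if j = 0 then (-c) * ((-1)^n * (c^n - ∑ k : Fin n, a k.succ * c^(k : ℕ)))
                else 0) := by
        intro j
        by_cases hjl : j = Fin.last n
        · subst hjl
          rw [if_pos rfl, if_neg hlast0]
          have hsub : ((compM (n+1) a c).submatrix Fin.succ (Fin.last n).succAbove).det = 1 := by
            have htri : ((compM (n+1) a c).submatrix Fin.succ
                (Fin.last n).succAbove).BlockTriangular id := by
              intro k' j' hlt
              simp only [id] at hlt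
              simp only [Matrix.submatrix_apply, Fin.succAbove_last, compM, Matrix.of_apply]
              have h1 : ((j'.castSucc : Fin (n+1)) : ℕ) + 1 ≠ n + 1 := by
                have := j'.isLt; simp only [Fin.coe_castSucc]; omega
              have h2 : ((k'.succ : Fin (n+1)) : ℕ) ≠ ((j'.castSucc : Fin (n+1)) : ℕ) + 1 := by
                simp only [Fin.val_succ, Fin.coe_castSucc]
                omega
              have h3 : (k'.succ : Fin (n+1)) ≠ j'.castSucc := by
                intro hEq
                have := congrArg Fin.val hEq
                simp only [Fin.val_succ, Fin.coe_castSucc] at this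
                omega
              rw [if_neg h1, if_neg h2, if_neg h3]
              ring
            rw [Matrix.det_of_upperTriangular htri]
            apply Finset.prod_eq_one
            intro k' _
            simp only [Matrix.submatrix_apply, Fin.succAbove_last, compM, Matrix.of_apply]
            have h1 : ((k'.castSucc : Fin (n+1)) : ℕ) + 1 ≠ n + 1 := by
              have := k'.isLt; simp only [Fin.coe_castSucc]; omega
            have h2 : ((k'.succ : Fin (n+1)) : ℕ) = ((k'.castSucc : Fin (n+1)) : ℕ) + 1 := by
              simp
            have h3 : (k'.succ : Fin (n+1)) ≠ k'.castSucc := by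
              intro hEq
              have := congrArg Fin.val hEq
              simp at this
            rw [if_neg h1, if_pos h2, if_neg h3]
            ring
          have hentry : compM (n+1) a c 0 (Fin.last n) = a 0 := by
            simp [compM, Ne.symm hlast0]
          rw [hsub, hentry, Fin.val_last]
          ring
        · rw [if_neg hjl]
          have hjn : (j : ℕ) < n := by
            have h2 := j.isLt
            have h3 : (j:ℕ) ≠ n := fun hEq => hjl (Fin.ext (by simp [Fin.val_last, hEq]))
            omega
          by_cases hj0 : j = 0
          · subst hj0
            rw [if_pos rfl]
            have hentry : compM (n+1) a c 0 0 = -c := by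
              have c1 : ¬ (((0:Fin (n+1)) : ℕ) + 1 = n + 1) := by
                simp only [Fin.val_zero]
                omega
              simp only [compM, Matrix.of_apply, if_neg c1]
              simp
            have hsub : (compM (n+1) a c).submatrix Fin.succ (Fin.succAbove 0)
                = compM n (fun k => a k.succ) c := by
              funext k' j'
              simp only [Matrix.submatrix_apply, compM, Matrix.of_apply]
              rw [Fin.succAbove_zero]
              have e1 : ((j'.succ : Fin (n+1)) : ℕ) + 1 = n + 1 ↔ (j' : ℕ) + 1 = n := by
                simp only [Fin.val_succ]
                omega
              have e2 : ((k'.succ : Fin (n+1)) : ℕ) = ((j'.succ : Fin (n+1)) : ℕ) + 1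
                  ↔ (k' : ℕ) = (j' : ℕ) + 1 := by
                simp only [Fin.val_succ]
                omega
              have e3 : (k'.succ : Fin (n+1)) = j'.succ ↔ k' = j' := by
                constructor
                · intro hEq
                  exact Fin.succ_injective n hEq
                · intro hEq
                  rw [hEq]
              congr 1
              · by_cases hc1 : (j' : ℕ) + 1 = n
                · rw [if_pos (e1.mpr hc1), if_pos hc1]
                · rw [if_neg (fun h => hc1 (e1.mp h)), if_neg hc1]
                  by_cases hc2 : (k' : ℕ) = (j' : ℕ) + 1
                  · rw [if_pos (e2.mpr hc2), if_pos hc2]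
                  · rw [if_neg (fun h => hc2 (e2.mp h)), if_neg hc2]
              · by_cases hc3 : k' = j'
                · rw [if_pos (e3.mpr hc3), if_pos hc3]
                · rw [if_neg (fun h => hc3 (e3.mp h)), if_neg hc3]
            rw [hentry, hsub, ih]
            norm_num
          · rw [if_neg hj0]
            have hentry : compM (n+1) a c 0 j = 0 := by
              have c1 : ¬ ((j : ℕ) + 1 = n + 1) := by omega
              have c2 : ¬ (((0:Fin (n+1)) : ℕ) = (j : ℕ) + 1) := by
                simp only [Fin.val_zero]
                omega
              simp only [compM, Matrix.of_apply, if_neg c1, if_neg c2, if_neg (Ne.symm hj0)]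
              ring
            rw [hentry]
            ring
      rw [Finset.sum_congr rfl fun j _ => hterm j, Finset.sum_add_distrib,
        Finset.sum_ite_eq' Finset.univ (Fin.last n), Finset.sum_ite_eq' Finset.univ (0 : Fin (n+1))]
      simp only [Finset.mem_univ, if_true]
      rw [Fin.sum_univ_succ]
      have hs : ∑ i : Fin n, a i.succ * c ^ ((i.succ : Fin (n+1)) : ℕ)
          = (∑ i : Fin n, a i.succ * c ^ (i : ℕ)) * c := by
        rw [Finset.sum_mul]
        refine Finset.sum_congr rfl fun i _ => ?_
        rw [Fin.val_succ, pow_succ]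
        ring
      rw [hs]
      simp only [Fin.val_zero, pow_zero]
      ring

lemma hSuper_one (c : A) (k : ℤ) :
    hSuper x (fun _ : Fin 1 => c) k
      = hSuper x (Fin.elim0 : Fin 0 → A) k - c * hSuper x (Fin.elim0 : Fin 0 → A) (k - 1) := by
  have h := hSuper_rec x (e := 0) (fun _ : Fin 1 => c) k
  have hy : ((fun _ : Fin 1 => c) ∘ Fin.castSucc) = (Fin.elim0 : Fin 0 → A) :=
    funext fun i => i.elim0
  rw [hy] at h
  exact h

lemma prod_sub_swap (c : A) :
    ∏ i : Fin f, (x i - c) = (-1)^f * ∏ i : Fin f, (c - x i) := by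
  have h : ∀ i : Fin f, x i - c = (-1) * (c - x i) := fun i => by ring
  rw [Finset.prod_congr rfl fun i _ => h i, Finset.prod_mul_distrib, Finset.prod_const,
    Finset.card_univ, Fintype.card_fin]

lemma pieri (c : A) (I : Fin f → ℕ) :
    schurDet x (fun _ : Fin 1 => c) (fun i => (I i : ℤ) + 1)
      = (∏ i : Fin f, (x i - c)) * schurDet x (Fin.elim0 : Fin 0 → A) (fun i => (I i : ℤ)) := by
  classical
  set V : Matrix (Fin f) (Fin f) A :=
    Matrix.of (fun i k : Fin f => hSuper x (Fin.elim0 : Fin 0 → A) ((I i : ℤ) + (k : ℤ) - (i : ℤ)))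
    with hV
  set W : Matrix (Fin f) (Fin f) A := compM f (fun k => - pcoef x (f - (k : ℕ))) c with hW
  have hVW : (Matrix.of fun i j : Fin f =>
      hSuper x (fun _ : Fin 1 => c) (((I i : ℤ) + 1) + (j : ℤ) - (i : ℤ))) = V * W := by
    funext i j
    show hSuper x (fun _ : Fin 1 => c) (((I i : ℤ) + 1) + (j : ℤ) - (i : ℤ)) = (V * W) i j
    rw [Matrix.mul_apply]
    rw [hSuper_one]
    by_cases hj : (j : ℕ) + 1 = f
    · -- last column
      have hWk : ∀ k : Fin f, W k j
          = - pcoef x (f - (k : ℕ)) - (if k = j then c else 0) := by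
        intro k
        simp only [hW, compM, Matrix.of_apply, if_pos hj]
      have step1 : ∀ k : Fin f, V i k * W k j
          = -(pcoef x (f - (k : ℕ)) * V i k) - (if k = j then V i k * c else 0) := by
        intro k
        rw [hWk k]
        by_cases hkj : k = j
        · rw [if_pos hkj, if_pos hkj]; ring
        · rw [if_neg hkj, if_neg hkj]; ring
      rw [Finset.sum_congr rfl fun k _ => step1 k, Finset.sum_sub_distrib]
      rw [Finset.sum_neg_distrib, Finset.sum_ite_eq' Finset.univ j (fun k => V i k * c)]
      simp only [Finset.mem_univ, if_true]
      set K : ℤ := (I i : ℤ) - (i : ℤ) + f with hK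
      have hKpos : (1:ℤ) ≤ K := by
        have h1 := i.isLt
        rw [hK]
        omega
      have hrec' := hrec x K hKpos
      rw [Finset.sum_range_succ'] at hrec'
      have hrefl := Finset.sum_range_reflect
        (fun r => pcoef x (r+1) * hSuper x (Fin.elim0 : Fin 0 → A) (K - (r+1 : ℕ))) f
      have hsum1 : ∑ k : Fin f, pcoef x (f - (k : ℕ)) * V i k
          = ∑ k ∈ Finset.range f, pcoef x (f - k) *
              hSuper x (Fin.elim0 : Fin 0 → A) ((I i : ℤ) + k - i) := by
        rw [← Fin.sum_univ_eq_sum_range (fun k => pcoef x (f - k) *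
          hSuper x (Fin.elim0 : Fin 0 → A) ((I i : ℤ) + k - i))]
        rfl
      have hsum2 : ∑ k ∈ Finset.range f, pcoef x (f - k) *
              hSuper x (Fin.elim0 : Fin 0 → A) ((I i : ℤ) + k - i)
          = ∑ r ∈ Finset.range f, pcoef x (r+1) *
              hSuper x (Fin.elim0 : Fin 0 → A) (K - (r+1 : ℕ)) := by
        rw [← hrefl]
        refine Finset.sum_congr rfl fun k hk => ?_
        simp only [Finset.mem_range] at hk
        have e1 : f - 1 - k + 1 = f - k := by omega
        have e2 : K - ((f - k : ℕ) : ℤ) = (I i : ℤ) + k - i := by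
          rw [hK]
          omega
        rw [e1, e2]
      have hKval : hSuper x (Fin.elim0 : Fin 0 → A) K
          = - ∑ k : Fin f, pcoef x (f - (k : ℕ)) * V i k := by
        rw [hsum1, hsum2]
        have h0 : pcoef x 0 * hSuper x (Fin.elim0 : Fin 0 → A) (K - ((0:ℕ):ℤ))
            = hSuper x (Fin.elim0 : Fin 0 → A) K := by
          rw [pcoef_zero, one_mul]
          norm_num
        linear_combination hrec' - h0
      have harg1 : ((I i : ℤ) + 1) + (j : ℤ) - (i : ℤ) = K := by
        have hjz : ((j : ℕ) : ℤ) + 1 = (f : ℤ) := by exact_mod_cast congrArg (Nat.cast : ℕ → ℤ) hj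
        rw [hK]
        omega
      have harg2 : ((I i : ℤ) + 1) + (j : ℤ) - (i : ℤ) - 1 = (I i : ℤ) + (j : ℤ) - (i : ℤ) := by
        ring
      rw [harg2, harg1, hKval]
      have hVij : V i j = hSuper x (Fin.elim0 : Fin 0 → A) ((I i : ℤ) + (j : ℤ) - (i : ℤ)) := rfl
      rw [← hVij]
      ring
    · -- middle column
      have hjlt : (j : ℕ) + 1 < f := by
        have := j.isLt
        omega
      set j1 : Fin f := ⟨(j : ℕ) + 1, hjlt⟩ with hj1
      have hWk : ∀ k : Fin f, W k j
          = (if k = j1 then (1:A) else 0) - (if k = j then c else 0) := by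
        intro k
        simp only [hW, compM, Matrix.of_apply, if_neg hj]
        congr 1
        refine if_congr ?_ rfl rfl
        exact (Fin.ext_iff (a := k) (b := j1)).symm
      have step1 : ∀ k : Fin f, V i k * W k j
          = (if k = j1 then V i k else 0) - (if k = j then V i k * c else 0) := by
        intro k
        rw [hWk k]
        have hj1j : j1 ≠ j := by
          intro hEq
          have hvv := congrArg Fin.val hEq
          simp only [hj1] at hvv
          omega
        by_cases h1 : k = j1
        · simp only [if_pos h1, if_neg (fun h2 => hj1j (h1.symm.trans h2))]
          ring
        · by_cases h2 : k = j
          · simp only [if_neg h1, if_pos h2]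
            ring
          · simp only [if_neg h1, if_neg h2]
            ring
      rw [Finset.sum_congr rfl fun k _ => step1 k, Finset.sum_sub_distrib,
        Finset.sum_ite_eq' Finset.univ j1 (fun k => V i k),
        Finset.sum_ite_eq' Finset.univ j (fun k => V i k * c)]
      simp only [Finset.mem_univ, if_true]
      have hV1 : V i j1 = hSuper x (Fin.elim0 : Fin 0 → A) (((I i : ℤ) + 1) + (j : ℤ) - (i : ℤ)) := by
        show hSuper x (Fin.elim0 : Fin 0 → A) ((I i : ℤ) + ((j1 : ℕ) : ℤ) - (i : ℤ)) = _
        congr 1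
        have hval : ((j1 : ℕ) : ℤ) = ((j : ℕ) : ℤ) + 1 := by
          rw [hj1]
          push_cast
          ring
        rw [hval]
        ring
      have hV2 : V i j = hSuper x (Fin.elim0 : Fin 0 → A) ((I i : ℤ) + (j : ℤ) - (i : ℤ)) := rfl
      rw [hV1, hV2]
      have harg : ((I i : ℤ) + 1) + (j : ℤ) - (i : ℤ) - 1 = (I i : ℤ) + (j : ℤ) - (i : ℤ) := by
        ring
      rw [harg]
      ring
  have hdetW : W.det = ∏ i : Fin f, (x i - c) := by
    rw [hW, compM_det]
    have hps := pcoef_sum x c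
    rw [Finset.sum_range_succ'] at hps
    have hrefl := Finset.sum_range_reflect (fun r => pcoef x (r+1) * c ^ (f - 1 - r)) f
    have hsum : ∑ k : Fin f, - pcoef x (f - (k:ℕ)) * c ^ (k:ℕ)
        = - ∑ r ∈ Finset.range f, pcoef x (r+1) * c ^ (f - (r+1)) := by
      have hs1 : ∑ k : Fin f, - pcoef x (f - (k:ℕ)) * c ^ (k:ℕ)
          = - ∑ k ∈ Finset.range f, pcoef x (f - k) * c ^ k := by
        rw [← Fin.sum_univ_eq_sum_range (fun k => pcoef x (f - k) * c ^ k)]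
        rw [← Finset.sum_neg_distrib]
        refine Finset.sum_congr rfl fun k _ => by ring
      rw [hs1]
      congr 1
      rw [show (∑ r ∈ Finset.range f, pcoef x (r+1) * c ^ (f - (r+1)))
          = ∑ r ∈ Finset.range f, pcoef x (r+1) * c ^ (f-1-r) from
        Finset.sum_congr rfl fun r hr => by
          rw [show f - (r+1) = f-1-r by omega]]
      rw [← hrefl]
      refine Finset.sum_congr rfl fun k hk => ?_
      simp only [Finset.mem_range] at hk
      have e1 : f - 1 - k + 1 = f - k := by omega
      have e2 : f - 1 - (f - 1 - k) = k := by omega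
      rw [e1, e2]
    rw [hsum]
    have hps2 : c ^ f + ∑ r ∈ Finset.range f, pcoef x (r+1) * c ^ (f - (r+1))
        = ∏ i : Fin f, (c - x i) := by
      have h00 : pcoef x 0 * c ^ (f - 0) = c ^ f := by
        rw [pcoef_zero, one_mul, Nat.sub_zero]
      linear_combination hps - h00
    rw [prod_sub_swap]
    have : c ^ f - - ∑ r ∈ Finset.range f, pcoef x (r+1) * c ^ (f - (r+1))
        = c ^ f + ∑ r ∈ Finset.range f, pcoef x (r+1) * c ^ (f - (r+1)) := by ring
    rw [this, hps2]
  show Matrix.det _ = _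
  rw [hVW, Matrix.det_mul, hdetW]
  rw [mul_comm]
  rfl

lemma schurDet_zero_y {p : ℕ} (y0 : Fin 0 → A) (I : Fin p → ℤ) :
    schurDet x y0 I = schurDet x (Fin.elim0 : Fin 0 → A) I := by
  have h : y0 = (Fin.elim0 : Fin 0 → A) := funext fun i => i.elim0
  rw [h]

lemma schurDet_congr {e' p : ℕ} (y : Fin e' → A) (I J : Fin p → ℤ) (h : ∀ i, I i = J i) :
    schurDet x y I = schurDet x y J :=
  congrArg (schurDet x y) (funext h)

lemma genSeries_elim0 :
    genSeries x (Fin.elim0 : Fin 0 → A) = ∏ i : Fin f, PowerSeries.mk fun n => x i ^ n := by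
  unfold genSeries
  rw [Finset.univ_eq_empty (α := Fin 0), Finset.prod_empty, one_mul]

lemma main_ind : ∀ (e : ℕ) (y : Fin e → A) (μ : Fin f → ℕ),
    schurDet x y (fun i => (e : ℤ) + (μ i : ℤ))
      = (∏ i : Fin f, ∏ j : Fin e, (x i - y j)) *
          schurDet x (Fin.elim0 : Fin 0 → A) (fun i => (μ i : ℤ)) := by
  intro e
  induction e with
  | zero =>
    intro y μ
    rw [schurDet_zero_y]
    rw [schurDet_congr x (Fin.elim0 : Fin 0 → A)
      (fun i => ((0:ℕ) : ℤ) + (μ i : ℤ)) (fun i => (μ i : ℤ)) (fun i => by push_cast; ring)]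
    simp
  | succ e ih =>
    intro y μ
    rw [branching]
    set c := y (Fin.last e) with hc
    set y' := y ∘ Fin.castSucc with hy'
    set P : A := ∏ i : Fin f, ∏ j : Fin e, (x i - y' j) with hP
    have hterm : ∀ S : Finset (Fin f),
        schurDet x y' (fun i => ((e+1 : ℕ) : ℤ) + ((μ i : ℕ) : ℤ) - if i ∈ S then 1 else 0)
        = P * schurDet x (Fin.elim0 : Fin 0 → A)
            (fun i => (((μ i + (if i ∈ S then 0 else 1) : ℕ)) : ℤ)) := by
      intro S
      rw [schurDet_congr x y'
        (fun i => ((e+1 : ℕ) : ℤ) + ((μ i : ℕ) : ℤ) - if i ∈ S then 1 else 0)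
        (fun i => ((e : ℕ) : ℤ) + ((μ i + (if i ∈ S then 0 else 1) : ℕ) : ℤ))
        (fun i => by by_cases hi : i ∈ S <;> simp only [hi, if_true, if_false] <;>
          push_cast <;> ring)]
      exact ih y' (fun i => μ i + if i ∈ S then 0 else 1)
    rw [Finset.sum_congr rfl fun S _ => by rw [hterm S]]
    -- pieri side
    have hb1 := branching x (e := 0) (fun _ : Fin 1 => c) (fun i => ((μ i : ℕ) : ℤ) + 1)
    have hb1' : schurDet x (fun _ : Fin 1 => c) (fun i => ((μ i : ℕ) : ℤ) + 1)
        = ∑ S : Finset (Fin f), (∏ _i ∈ S, -c) *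
            schurDet x (Fin.elim0 : Fin 0 → A)
              (fun i => (((μ i + (if i ∈ S then 0 else 1) : ℕ)) : ℤ)) := by
      rw [hb1]
      refine Finset.sum_congr rfl fun S _ => ?_
      rw [schurDet_zero_y]
      congr 1
      rw [schurDet_congr x (Fin.elim0 : Fin 0 → A)
        (fun i => ((μ i : ℕ) : ℤ) + 1 - if i ∈ S then 1 else 0)
        (fun i => (((μ i + (if i ∈ S then 0 else 1) : ℕ)) : ℤ))
        (fun i => by by_cases hi : i ∈ S <;> simp only [hi, if_true, if_false] <;>
          push_cast <;> ring)]
    have hsum : ∑ S : Finset (Fin f), (∏ _i ∈ S, -c) *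
        (P * schurDet x (Fin.elim0 : Fin 0 → A)
            (fun i => (((μ i + (if i ∈ S then 0 else 1) : ℕ)) : ℤ)))
        = P * schurDet x (fun _ : Fin 1 => c) (fun i => ((μ i : ℕ) : ℤ) + 1) := by
      rw [hb1', Finset.mul_sum]
      refine Finset.sum_congr rfl fun S _ => ?_
      ring
    rw [hsum, pieri x c μ]
    have hsplit : ∏ i : Fin f, ∏ j : Fin (e+1), (x i - y j)
        = P * ∏ i : Fin f, (x i - c) := by
      rw [hP, ← Finset.prod_mul_distrib]
      refine Finset.prod_congr rfl fun i _ => ?_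
      rw [Fin.prod_univ_castSucc]
      rfl
    rw [hsplit]
    ring

lemma hSuper_elim0_zero : hSuper x (Fin.elim0 : Fin 0 → A) 0 = 1 := by
  unfold hSuper
  rw [if_neg (by omega : ¬ (0:ℤ) < 0)]
  rw [genSeries_elim0]
  show PowerSeries.coeff 0 _ = 1
  rw [PowerSeries.coeff_zero_eq_constantCoeff, map_prod]
  refine Finset.prod_eq_one fun i _ => ?_
  rw [← PowerSeries.coeff_zero_eq_constantCoeff, PowerSeries.coeff_mk, pow_zero]

lemma schurDet_shape_zero : schurDet x (Fin.elim0 : Fin 0 → A) (fun _ : Fin f => ((0:ℕ) : ℤ)) = 1 := by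
  unfold schurDet
  have htri : (Matrix.of fun i j : Fin f =>
      hSuper x (Fin.elim0 : Fin 0 → A) (((0:ℕ) : ℤ) + (j : ℤ) - (i : ℤ))).BlockTriangular id := by
    intro i j hij
    simp only [id] at hij
    simp only [Matrix.of_apply]
    unfold hSuper
    rw [if_pos]
    have h1 : ((j:Fin f) : ℕ) < ((i : Fin f) : ℕ) := hij
    push_cast
    omega
  rw [Matrix.det_of_upperTriangular htri]
  refine Finset.prod_eq_one fun i _ => ?_
  simp only [Matrix.of_apply]
  have harg : ((0:ℕ) : ℤ) + (i : ℤ) - (i : ℤ) = 0 := by push_cast; ring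
  rw [harg, hSuper_elim0_zero]

end RectangleSchurHelpers

/-- **Rectangle Schur determinant as a product.**  For `R = (e)^f`,
`s_R(x − y) = ∏_{i=1}^f ∏_{j=1}^e (x_i − y_j)`. -/
theorem rectangle_schur_eq_prod {A : Type*} [CommRing A] {f e : ℕ}
    (x : Fin f → A) (y : Fin e → A) :
    schurDet x y (fun _ : Fin f => (e : ℤ)) = ∏ i : Fin f, ∏ j : Fin e, (x i - y j) := by
  have h := main_ind x e y (fun _ => 0)
  rw [schurDet_congr x y (fun _ : Fin f => (e : ℤ))
    (fun i => (e : ℤ) + ((0:ℕ) : ℤ)) (fun i => by push_cast; ring)]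
  rw [h, schurDet_shape_zero, mul_one]
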